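/- Let μ be a real number and ν > 0, with a = arcsinh((1−μ)/ν), b = arcsinh((1+μ)/ν), and g(t) = μ + ν·sinh((a+b)(t−1)/2 + a). Then for every real t, g'(t) / √((g(t)−μ)² + ν²) = (a+b)/2. In particular, the transplanted integrand of f_{μ,ν}(t) = 1/√((t−μ)²+ν²) under g is constant, so the one-point transplanted Gauss rule 2·g'(t₁)·f_{μ,ν}(g(t₁)) at any node t₁ equals a+b, the exact value of ∫_{−1}^{1} f_{μ,ν}(t) dt. -/

import Mathlib

open Real

/-- With `a = arcsinh((1−μ)/ν)`, `b = arcsinh((1+μ)/ν)` and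
`g(t) = μ + ν·sinh((a+b)(t−1)/2 + a)`, the transplanted integrand of
`f_{μ,ν}(t) = 1/√((t−μ)²+ν²)` is constant: `g'(t)/√((g(t)−μ)²+ν²) = (a+b)/2`
for every real `t`; hence the one-point transplanted Gauss rule
`2·g'(t₁)·f_{μ,ν}(g(t₁))` equals `a+b`, the exact value of `∫_{−1}^{1} f_{μ,ν}`. -/
theorem transplanted_integrand_constant (μ ν : ℝ) (hν : 0 < ν)
    (a b : ℝ) (ha : a = Real.arsinh ((1 - μ) / ν)) (hb : b = Real.arsinh ((1 + μ) / ν))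
    (g : ℝ → ℝ) (hg : ∀ z : ℝ, g z = μ + ν * Real.sinh ((a + b) * (z - 1) / 2 + a)) :
    (∀ t : ℝ, deriv g t / Real.sqrt ((g t - μ) ^ 2 + ν ^ 2) = (a + b) / 2) ∧
    (∀ t₁ : ℝ, 2 * deriv g t₁ * (1 / Real.sqrt ((g t₁ - μ) ^ 2 + ν ^ 2)) = a + b) ∧
    (∫ t in (-1 : ℝ)..1, 1 / Real.sqrt ((t - μ) ^ 2 + ν ^ 2)) = a + b := by
  have hgfun : g = fun z => μ + ν * Real.sinh ((a + b) * (z - 1) / 2 + a) := funext hg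
  have hderiv : ∀ t : ℝ, deriv g t
      = ν * Real.cosh ((a + b) * (t - 1) / 2 + a) * ((a + b) / 2) := by
    intro t
    have hu : HasDerivAt (fun z : ℝ => (a + b) * (z - 1) / 2 + a) ((a + b) / 2) t := by
      have : HasDerivAt (fun z : ℝ => z) 1 t := hasDerivAt_id t
      simpa using (((this.sub_const 1).const_mul (a + b)).div_const 2).add_const a
    have := ((hu.sinh).const_mul ν).const_add μ
    rw [hgfun]
    simpa [mul_comm, mul_assoc, mul_left_comm] using this.deriv
  have hsqrt : ∀ t : ℝ, Real.sqrt ((g t - μ) ^ 2 + ν ^ 2)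
      = ν * Real.cosh ((a + b) * (t - 1) / 2 + a) := by
    intro t
    rw [hg]
    have : (μ + ν * Real.sinh ((a + b) * (t - 1) / 2 + a) - μ) ^ 2 + ν ^ 2
        = (ν * Real.cosh ((a + b) * (t - 1) / 2 + a)) ^ 2 := by
      rw [mul_pow, Real.cosh_sq]; ring
    rw [this, Real.sqrt_sq (by positivity)]
  have hpos : ∀ t : ℝ, 0 < ν * Real.cosh ((a + b) * (t - 1) / 2 + a) := by
    intro t; positivity
  have h1 : ∀ t : ℝ, deriv g t / Real.sqrt ((g t - μ) ^ 2 + ν ^ 2) = (a + b) / 2 := by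
    intro t
    rw [hderiv, hsqrt, mul_comm, mul_div_assoc, div_self (hpos t).ne', mul_one]
  refine ⟨h1, fun t₁ => by have := h1 t₁
                           have h2 := Real.sqrt_pos.mpr (by positivity : (0:ℝ) < (g t₁ - μ) ^ 2 + ν ^ 2)
                           field_simp at this ⊢; linarith, ?_⟩
  have hI := intervalIntegral.integral_eq_sub_of_hasDerivAt
    (f := fun x : ℝ => Real.arsinh ((x - μ) / ν))
    (f' := fun t : ℝ => 1 / Real.sqrt ((t - μ) ^ 2 + ν ^ 2))
    (a := (-1 : ℝ)) (b := (1 : ℝ))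
    (fun t _ => by
      have hu : HasDerivAt (fun x : ℝ => (x - μ) / ν) (1 / ν) t := by
        simpa using ((hasDerivAt_id t).sub_const μ).div_const ν
      have h2 := (Real.hasDerivAt_arsinh ((t - μ) / ν)).comp t hu
      have heq : (Real.sqrt (1 + ((t - μ) / ν) ^ 2))⁻¹ * (1 / ν)
          = 1 / Real.sqrt ((t - μ) ^ 2 + ν ^ 2) := by
        rw [show 1 + ((t - μ) / ν) ^ 2 = ((t - μ) ^ 2 + ν ^ 2) / ν ^ 2 by
              field_simp; ring,
            Real.sqrt_div (by positivity), Real.sqrt_sq hν.le]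
        have hs : 0 < Real.sqrt ((t - μ) ^ 2 + ν ^ 2) := Real.sqrt_pos.mpr (by positivity)
        field_simp
      exact (heq ▸ h2 : HasDerivAt (fun x => Real.arsinh ((x - μ) / ν)) (1 / Real.sqrt ((t - μ) ^ 2 + ν ^ 2)) t))
    (by
      apply Continuous.intervalIntegrable
      apply continuous_const.div
      · exact (((continuous_id.sub continuous_const).pow 2).add continuous_const).sqrt
      · intro x; positivity)
  rw [hI]
  have hneg : ((-1 : ℝ) - μ) / ν = -((1 + μ) / ν) := by ring
  simp only [hneg, Real.arsinh_neg, ha, hb]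
  ring
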